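/- Let Θ be p-convex with constant c₀ (so ‖∇Θ*(ξ₁) − ∇Θ*(ξ₂)‖ ≤ (‖ξ₁−ξ₂‖/(2c₀))^{1/(p−1)}), let F satisfy the tangential cone condition with constant η < 1 and ‖L(x)‖ ≤ C₀ on the relevant ball, and let ζₙ = ξₙ + λₙ(ξₙ − ξ_{n−1}), zₙ = ∇Θ*(ζₙ), xₙ = ∇Θ*(ξₙ). If the combination parameters satisfy (1/(p*(2c₀)^{p*−1}))(λₙ^{p*} + λₙ)‖ξₙ − ξ_{n−1}‖^{p*} ≤ (c₁/ν) μₙ‖F(zₙ) − y‖^s and μₙ ≤ μ̄₁ ‖F(zₙ)−y‖^{p−s}, then ‖F(xₙ) − F(zₙ)‖ ≤ (C₀/(1−η)) (c₁ p* μ̄₁/(2c₀ν))^{1/p} ‖F(zₙ) − y‖. -/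

import Mathlib

private lemma aux_coeff_simplify (pstar c₀ c₁ μ₁ ν R P : ℝ) (hA : 2 * c₀ ≠ 0)
    (hν0 : ν ≠ 0) (hP : P ≠ 0) :
    pstar * (P / (2 * c₀)) * (c₁ * μ₁ / ν) * R / P
      = c₁ * pstar * μ₁ / (2 * c₀ * ν) * R := by
  field_simp

/-- All the scalar work: from the parameter condition and step-size bound, the
Hölder bound on `‖x - z‖` is controlled by the residual `r`. -/
private lemma aux_scalar_estimate (p pstar c₀ c₁ ν μ₁ l μ s d r : ℝ)
    (hc₀ : 0 < c₀) (hp : 2 ≤ p) (hpstar : pstar = p / (p - 1))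
    (hc₁ : 0 < c₁) (hν : 1 < ν) (hμ₁ : 0 < μ₁) (hl : 0 ≤ l) (hμ : 0 ≤ μ)
    (hs : 1 < s) (hd0 : 0 ≤ d) (hr0 : 0 ≤ r)
    (hparam : (1 / (pstar * (2 * c₀) ^ (pstar - 1))) * (l ^ pstar + l) * d ^ pstar
      ≤ (c₁ / ν) * μ * r ^ s)
    (hstepsize : μ ≤ μ₁ * r ^ (p - s)) :
    (l * d / (2 * c₀)) ^ (pstar - 1) ≤ (c₁ * pstar * μ₁ / (2 * c₀ * ν)) ^ (1 / p) * r := by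
  have hpm1 : (0:ℝ) < p - 1 := by linarith
  have hp0 : (0:ℝ) < p := by linarith
  have hν0 : (0:ℝ) < ν := by linarith
  have hps : 0 < pstar := by rw [hpstar]; positivity
  have hA : (0:ℝ) < 2 * c₀ := by linarith
  have hApow : (0:ℝ) < (2 * c₀) ^ (pstar - 1) := Real.rpow_pos_of_pos hA _
  have hApow' : (0:ℝ) < (2 * c₀) ^ pstar := Real.rpow_pos_of_pos hA _
  have hld : (0:ℝ) ≤ l * d := mul_nonneg hl hd0
  -- parameter condition rearranged
  have hC : (l * d) ^ pstar ≤ pstar * (2 * c₀) ^ (pstar - 1) * (c₁ * μ₁ / ν) * r ^ p := by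
    have h1 : (l * d) ^ pstar = l ^ pstar * d ^ pstar := Real.mul_rpow hl hd0
    have hlp : (0:ℝ) ≤ l ^ pstar := Real.rpow_nonneg hl _
    have hdp : (0:ℝ) ≤ d ^ pstar := Real.rpow_nonneg hd0 _
    have h3 : μ * r ^ s ≤ μ₁ * r ^ p := by
      calc μ * r ^ s ≤ μ₁ * r ^ (p - s) * r ^ s := by
            have : (0:ℝ) ≤ r ^ s := Real.rpow_nonneg hr0 _
            exact mul_le_mul_of_nonneg_right hstepsize this
        _ = μ₁ * r ^ p := by
            rw [mul_assoc, ← Real.rpow_add' hr0 (by norm_num; linarith)]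
            norm_num
    have h4 : (l ^ pstar + l) * d ^ pstar
        ≤ pstar * (2 * c₀) ^ (pstar - 1) * ((c₁ / ν) * μ * r ^ s) := by
      have hco : (0:ℝ) < pstar * (2 * c₀) ^ (pstar - 1) := by positivity
      have h := hparam
      rw [div_mul_eq_mul_div, div_mul_eq_mul_div, one_mul, div_le_iff₀ hco] at h
      linarith [h]
    have h5 : pstar * (2 * c₀) ^ (pstar - 1) * ((c₁ / ν) * μ * r ^ s)
        ≤ pstar * (2 * c₀) ^ (pstar - 1) * (c₁ * μ₁ / ν) * r ^ p := by
      have h6 : (c₁ / ν) * μ * r ^ s ≤ (c₁ / ν) * (μ₁ * r ^ p) := by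
        rw [mul_assoc]
        exact mul_le_mul_of_nonneg_left h3 (div_nonneg hc₁.le hν0.le)
      calc pstar * (2 * c₀) ^ (pstar - 1) * ((c₁ / ν) * μ * r ^ s)
          ≤ pstar * (2 * c₀) ^ (pstar - 1) * ((c₁ / ν) * (μ₁ * r ^ p)) :=
            mul_le_mul_of_nonneg_left h6 (mul_nonneg hps.le hApow.le)
        _ = pstar * (2 * c₀) ^ (pstar - 1) * (c₁ * μ₁ / ν) * r ^ p := by ring
    calc (l * d) ^ pstar = l ^ pstar * d ^ pstar := h1
      _ ≤ (l ^ pstar + l) * d ^ pstar :=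
          mul_le_mul_of_nonneg_right (le_add_of_nonneg_right hl) hdp
      _ ≤ _ := le_trans h4 h5
  have hmul : pstar * (1 / p) = pstar - 1 := by
    rw [hpstar]; field_simp; ring
  have e2 : pstar * (2 * c₀) ^ (pstar - 1) * (c₁ * μ₁ / ν) * r ^ p / (2 * c₀) ^ pstar
      = c₁ * pstar * μ₁ / (2 * c₀ * ν) * r ^ p := by
    rw [Real.rpow_sub hA, Real.rpow_one]
    exact aux_coeff_simplify pstar c₀ c₁ μ₁ ν (r ^ p) ((2 * c₀) ^ pstar)
      hA.ne' hν0.ne' hApow'.ne'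
  calc (l * d / (2 * c₀)) ^ (pstar - 1)
      = ((l * d / (2 * c₀)) ^ pstar) ^ (1 / p) := by
        rw [← Real.rpow_mul (by positivity), hmul]
    _ = ((l * d) ^ pstar / (2 * c₀) ^ pstar) ^ (1 / p) := by
        rw [Real.div_rpow hld hA.le]
    _ ≤ ((pstar * (2 * c₀) ^ (pstar - 1) * (c₁ * μ₁ / ν) * r ^ p) / (2 * c₀) ^ pstar) ^ (1 / p) := by
        gcongr
    _ = (c₁ * pstar * μ₁ / (2 * c₀ * ν) * r ^ p) ^ (1 / p) := by rw [e2]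
    _ = (c₁ * pstar * μ₁ / (2 * c₀ * ν)) ^ (1 / p) * (r ^ p) ^ (1 / p) := by
        rw [Real.mul_rpow (by positivity) (Real.rpow_nonneg hr0 _)]
    _ = (c₁ * pstar * μ₁ / (2 * c₀ * ν)) ^ (1 / p) * r := by
        rw [← Real.rpow_mul hr0, mul_one_div, div_self hp0.ne', Real.rpow_one]

/-- Key chain (3.24) of Theorem 3.7: `‖F(xₙ) − F(zₙ)‖` is controlled by the residual
`‖F(zₙ) − y‖`. -/
theorem residual_comparison_estimate {X Y : Type*} [NormedAddCommGroup X]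
    [NormedSpace ℝ X] [NormedAddCommGroup Y] [NormedSpace ℝ Y]
    (Θ : X → ℝ) (c₀ p pstar c₁ ν μ₁ C₀ η l μ s : ℝ)
    (hc₀ : 0 < c₀) (hp : 2 ≤ p) (hpstar : pstar = p / (p - 1))
    (hc₁ : 0 < c₁) (hν : 1 < ν) (hμ₁ : 0 < μ₁) (hC₀ : 0 < C₀)
    (hη0 : 0 ≤ η) (hη1 : η < 1) (hl : 0 ≤ l) (hμ : 0 ≤ μ) (hs : 1 < s)
    (G : (X →L[ℝ] ℝ) → X)
    (hholder : ∀ a b : (X →L[ℝ] ℝ), ‖G a - G b‖ ≤ (‖a - b‖ / (2 * c₀)) ^ (1 / (p - 1)))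
    (B : Set X) (F : X → Y) (L : X → (X →L[ℝ] Y))
    (htc : ∀ a ∈ B, ∀ b ∈ B, ‖F a - F b - L b (a - b)‖ ≤ η * ‖F a - F b‖)
    (hLb : ∀ a ∈ B, ‖L a‖ ≤ C₀)
    (ξ ξ' ζ : X →L[ℝ] ℝ) (x z : X) (y : Y)
    (hζ : ζ = ξ + l • (ξ - ξ')) (hz : z = G ζ) (hx : x = G ξ)
    (hxB : x ∈ B) (hzB : z ∈ B)
    (hparam : (1 / (pstar * (2 * c₀) ^ (pstar - 1))) * (l ^ pstar + l) * ‖ξ - ξ'‖ ^ pstar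
      ≤ (c₁ / ν) * μ * ‖F z - y‖ ^ s)
    (hstepsize : μ ≤ μ₁ * ‖F z - y‖ ^ (p - s)) :
    ‖F x - F z‖ ≤
      (C₀ / (1 - η)) * (c₁ * pstar * μ₁ / (2 * c₀ * ν)) ^ (1 / p) * ‖F z - y‖ := by
  have hpm1 : (0:ℝ) < p - 1 := by linarith
  have hps1 : pstar - 1 = 1 / (p - 1) := by
    rw [hpstar]; field_simp; ring
  -- Step A: tangential cone estimate
  have hA1 : ‖F x - F z‖ ≤ C₀ / (1 - η) * ‖x - z‖ := by
    have h1 := htc x hxB z hzB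
    have h2 : ‖L z (x - z)‖ ≤ C₀ * ‖x - z‖ := by
      calc ‖L z (x - z)‖ ≤ ‖L z‖ * ‖x - z‖ := (L z).le_opNorm _
        _ ≤ C₀ * ‖x - z‖ := by gcongr; exact hLb z hzB
    have h3 : ‖F x - F z‖ ≤ ‖F x - F z - L z (x - z)‖ + ‖L z (x - z)‖ := by
      have he : F x - F z = (F x - F z - L z (x - z)) + L z (x - z) := by abel
      calc ‖F x - F z‖ = ‖(F x - F z - L z (x - z)) + L z (x - z)‖ := by rw [← he]
        _ ≤ _ := norm_add_le _ _
    rw [div_mul_eq_mul_div, le_div_iff₀ (by linarith)]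
    nlinarith [norm_nonneg (F x - F z)]
  -- Step B: Hölder estimate for the duality map
  have hB : ‖x - z‖ ≤ (l * ‖ξ - ξ'‖ / (2 * c₀)) ^ (pstar - 1) := by
    have h1 : ξ - ζ = -(l • (ξ - ξ')) := by
      rw [hζ, sub_add_eq_sub_sub, sub_self, zero_sub]
    rw [hx, hz]
    calc ‖G ξ - G ζ‖ ≤ (‖ξ - ζ‖ / (2 * c₀)) ^ (1 / (p - 1)) := hholder ξ ζ
      _ = (l * ‖ξ - ξ'‖ / (2 * c₀)) ^ (pstar - 1) := by
          have hn := norm_smul l (ξ - ξ')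
          rw [h1, norm_neg, hn, Real.norm_eq_abs, abs_of_nonneg hl, hps1]
  -- Step C/D: scalar estimate
  have hD := aux_scalar_estimate p pstar c₀ c₁ ν μ₁ l μ s ‖ξ - ξ'‖ ‖F z - y‖
    hc₀ hp hpstar hc₁ hν hμ₁ hl hμ hs (norm_nonneg _) (norm_nonneg _) hparam hstepsize
  calc ‖F x - F z‖ ≤ C₀ / (1 - η) * ‖x - z‖ := hA1
    _ ≤ C₀ / (1 - η) * ((c₁ * pstar * μ₁ / (2 * c₀ * ν)) ^ (1 / p) * ‖F z - y‖) := by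
        have hco : (0:ℝ) ≤ C₀ / (1 - η) := div_nonneg hC₀.le (by linarith)
        exact mul_le_mul_of_nonneg_left (le_trans hB hD) hco
    _ = (C₀ / (1 - η)) * (c₁ * pstar * μ₁ / (2 * c₀ * ν)) ^ (1 / p) * ‖F z - y‖ := by ring
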